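/- Fix a horizon H ≥ 1, real Hilbert spaces E and F with E × F carrying the ℓ² product inner product, β > 0, λ > 0, σₓ ≥ 0, and constants C₁ ≥ 1, C₂ ≥ 1. For h = 0, …, H−1, let r_h : E × F → ℝ be nonnegative, convex, and β-smooth, let f_h : E × F → E satisfy ‖f_h(x,u) − f_h(x',u)‖ ≤ σₓ·‖x − x'‖ for all x, x', u, and define the reservation coefficients q_h = C₁·(1 + 1/λ)·(β/2)·Σ_{i=0}^{H−h−1} (C₂·σₓ²)^i. Given actions u_0, …, u_{H−1} ∈ F and prior actions u†_0, …, u†_{H−1} ∈ F, define states by x_0 = x†_0, x_{h+1} = f_h(x_h, u_h), x†_{h+1} = f_h(x†_h, u†_h). Say that an action u satisfies the round-h safety constraint if Σ_{i=0}^{h−1} r_i(x_i, u_i) + r_h(x_h, u) + q_h·‖f_h(x_h, u) − f_h(x†_h, u†_h)‖² ≤ (1+λ)·Σ_{i=0}^{h} r_i(x†_i, u†_i). Then for every h ∈ {0, …, H−1}: if each u_i for i < h satisfies the round-i safety constraint, the prior action u†_h satisfies the round-h safety constraint; in particular the round-h safe action set is nonempty. (Proposition 4.2.) -/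

import Mathlib

open scoped RealInnerProductSpace

section auxlemmas
variable {G : Type*} [NormedAddCommGroup G] [InnerProductSpace ℝ G] [CompleteSpace G]

/-- Gradient inequality for convex functions. -/
lemma convex_grad_ineq {r : G → ℝ} (hc : ConvexOn ℝ Set.univ r) {z gz : G}
    (hg : HasGradientAt r gz z) (w : G) : r z + ⟪gz, w - z⟫ ≤ r w := by
  set c : ℝ → G := fun t : ℝ => z + t • (w - z) with hcdef
  have hline : ∀ t : ℝ, HasDerivAt c (w - z) t := by
    intro t
    simpa [hcdef] using ((hasDerivAt_id t).smul_const (w - z)).const_add z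
  have hgz : HasFDerivAt r (InnerProductSpace.toDual ℝ G gz : G →L[ℝ] ℝ) (c 0) := by
    simpa [hcdef] using hg.hasFDerivAt
  have hφ : HasDerivAt (r ∘ c) ⟪gz, w - z⟫ 0 := by
    simpa using hgz.comp_hasDerivAt 0 (hline 0)
  have hφc : ConvexOn ℝ Set.univ (r ∘ c) := by
    have h1 := hc.comp_affineMap (AffineMap.lineMap z w : ℝ →ᵃ[ℝ] G)
    have h2 : (r ∘ ⇑(AffineMap.lineMap z w : ℝ →ᵃ[ℝ] G)) = r ∘ c := by
      funext t
      simp only [Function.comp, hcdef, AffineMap.lineMap_apply, vsub_eq_sub, vadd_eq_add]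
      rw [add_comm]
    simpa [h2] using h1
  have hs := hφc.le_slope_of_hasDerivAt (Set.mem_univ (0:ℝ)) (Set.mem_univ (1:ℝ)) one_pos hφ
  rw [slope_def_field] at hs
  have e0 : c 0 = z := by simp [hcdef]
  have e1 : c 1 = w := by simp [hcdef]
  simp only [Function.comp, e0, e1] at hs
  simp at hs
  linarith [hs]

/-- Descent lemma for functions with Lipschitz gradient. -/
lemma descent_lemma {r : G → ℝ} {g : G → G} {β : ℝ} (hβ : 0 ≤ β)
    (hgrad : ∀ z, HasGradientAt r (g z) z)
    (hglip : ∀ z w, ‖g z - g w‖ ≤ β * ‖z - w‖) (w z : G) :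
    r z ≤ r w + ⟪g w, z - w⟫ + β / 2 * ‖z - w‖ ^ 2 := by
  set c : ℝ → G := fun t : ℝ => w + t • (z - w) with hcdef
  have hccont : Continuous c := by
    exact continuous_const.add (continuous_id.smul continuous_const)
  have hgcont : Continuous g := by
    have : LipschitzWith β.toNNReal g := by
      apply LipschitzWith.of_dist_le_mul
      intro a b
      simpa [dist_eq_norm, Real.coe_toNNReal β hβ] using hglip a b
    exact this.continuous
  have hline : ∀ t : ℝ, HasDerivAt c (z - w) t := by
    intro t
    simpa [hcdef] using ((hasDerivAt_id t).smul_const (z - w)).const_add w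
  set φ' : ℝ → ℝ := fun t => ⟪g (c t), z - w⟫ with hφ'def
  have hφ : ∀ t : ℝ, HasDerivAt (r ∘ c) (φ' t) t := by
    intro t
    have hgz : HasFDerivAt r (InnerProductSpace.toDual ℝ G (g (c t)) : G →L[ℝ] ℝ) (c t) :=
      (hgrad (c t)).hasFDerivAt
    simpa using hgz.comp_hasDerivAt t (hline t)
  have hφ'cont : Continuous φ' := (hgcont.comp hccont).inner continuous_const
  have hFTC : ∫ t in (0:ℝ)..1, φ' t = (r ∘ c) 1 - (r ∘ c) 0 := by
    exact intervalIntegral.integral_eq_sub_of_hasDerivAt (fun t _ => hφ t)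
      (hφ'cont.intervalIntegrable 0 1)
  have hbound : ∀ t ∈ Set.Icc (0:ℝ) 1, φ' t ≤ φ' 0 + β * t * ‖z - w‖ ^ 2 := by
    intro t ht
    have h1 : φ' t - φ' 0 = ⟪g (c t) - g (c 0), z - w⟫ := by
      simp [hφ'def, inner_sub_left]
    have h2 : ⟪g (c t) - g (c 0), z - w⟫ ≤ ‖g (c t) - g (c 0)‖ * ‖z - w‖ :=
      real_inner_le_norm _ _
    have h3 : ‖g (c t) - g (c 0)‖ ≤ β * (t * ‖z - w‖) := by
      have := hglip (c t) (c 0)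
      have hc0 : c t - c 0 = t • (z - w) := by simp [hcdef]
      calc ‖g (c t) - g (c 0)‖ ≤ β * ‖c t - c 0‖ := this
        _ = β * (t * ‖z - w‖) := by
            rw [hc0, norm_smul]
            simp [Real.norm_eq_abs, abs_of_nonneg ht.1]
    nlinarith [norm_nonneg (z - w), mul_le_mul_of_nonneg_right h3 (norm_nonneg (z - w)), h2, h1]
  have hint : ∫ t in (0:ℝ)..1, φ' t ≤ ∫ t in (0:ℝ)..1, (φ' 0 + β * t * ‖z - w‖ ^ 2) := by
    apply intervalIntegral.integral_mono_on zero_le_one (hφ'cont.intervalIntegrable 0 1)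
    · exact (Continuous.intervalIntegrable (by continuity) 0 1)
    · exact hbound
  have hval : ∫ t in (0:ℝ)..1, (φ' 0 + β * t * ‖z - w‖ ^ 2) = φ' 0 + β / 2 * ‖z - w‖ ^ 2 := by
    rw [intervalIntegral.integral_add (intervalIntegrable_const)
      (by exact Continuous.intervalIntegrable (by continuity) 0 1)]
    have hrw : (fun t : ℝ => β * t * ‖z - w‖ ^ 2) = fun t : ℝ => (β * ‖z - w‖ ^ 2) * t := by
      funext t; ring
    rw [hrw, intervalIntegral.integral_const_mul, integral_id]
    simp
    ring
  have hc0 : c 0 = w := by simp [hcdef]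
  have hc1 : c 1 = z := by simp [hcdef]
  have hmain : r z - r w ≤ φ' 0 + β / 2 * ‖z - w‖ ^ 2 := by
    rw [← hval]
    calc r z - r w = (r ∘ c) 1 - (r ∘ c) 0 := by simp [hc0, hc1, Function.comp]
      _ = ∫ t in (0:ℝ)..1, φ' t := hFTC.symm
      _ ≤ _ := hint
  have hφ'0 : φ' 0 = ⟪g w, z - w⟫ := by simp [hφ'def, hc0]
  rw [hφ'0] at hmain
  linarith [hmain]

/-- Key smoothness bound: a nonnegative convex `β`-smooth function satisfies
`r z ≤ (1+λ) r w + (β/2)(1+1/λ) ‖z-w‖²`. -/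
lemma smooth_convex_bound {r : G → ℝ} {g : G → G} {β lam : ℝ} (hβ : 0 < β) (hlam : 0 < lam)
    (hr0 : ∀ z, 0 ≤ r z) (hgrad : ∀ z, HasGradientAt r (g z) z)
    (hglip : ∀ z w, ‖g z - g w‖ ≤ β * ‖z - w‖)
    (hc : ConvexOn ℝ Set.univ r) (w z : G) :
    r z ≤ (1 + lam) * r w + β / 2 * (1 + 1 / lam) * ‖z - w‖ ^ 2 := by
  have hgw : ‖g w‖ ^ 2 ≤ 2 * β * r w := by
    have h := descent_lemma hβ.le hgrad hglip w (w - (1/β) • g w)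
    have hz : (w - (1/β) • g w) - w = -((1/β) • g w) := by abel
    rw [hz] at h
    have hin : ⟪g w, -((1/β) • g w)⟫ = -((1/β) * ‖g w‖ ^ 2) := by
      rw [inner_neg_right, real_inner_smul_right, real_inner_self_eq_norm_sq]
    have hn : ‖-((1/β) • g w)‖ ^ 2 = (1/β)^2 * ‖g w‖ ^ 2 := by
      rw [norm_neg, norm_smul, mul_pow]
      congr 1
      rw [Real.norm_eq_abs, sq_abs]
    have h0 := hr0 (w - (1/β) • g w)
    rw [hin, hn] at h
    have hkey := le_trans h0 h
    have hβ' : β ≠ 0 := ne_of_gt hβ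
    have hexp : r w + -(1 / β * ‖g w‖ ^ 2) + β / 2 * ((1 / β) ^ 2 * ‖g w‖ ^ 2)
        = r w - ‖g w‖ ^ 2 / (2 * β) := by
      field_simp
      ring
    rw [hexp] at hkey
    have h2β : (0:ℝ) < 2 * β := by positivity
    rw [le_sub_iff_add_le, zero_add, div_le_iff₀ h2β] at hkey
    linarith [hkey]
  have hd := descent_lemma hβ.le hgrad hglip w z
  have hCS : ⟪g w, z - w⟫ ≤ ‖g w‖ * ‖z - w‖ := real_inner_le_norm _ _
  have hAM : ‖g w‖ * ‖z - w‖ ≤ lam / (2*β) * ‖g w‖^2 + β/(2*lam) * ‖z - w‖^2 := by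
    have hkey : lam / (2*β) * ‖g w‖^2 + β/(2*lam) * ‖z - w‖^2 - ‖g w‖ * ‖z - w‖
        = (lam * ‖g w‖ - β * ‖z - w‖)^2 / (2*β*lam) := by
      field_simp
      ring
    nlinarith [div_nonneg (sq_nonneg (lam * ‖g w‖ - β * ‖z - w‖))
      (le_of_lt (by positivity : (0:ℝ) < 2*β*lam)), hkey]
  have hmul : lam / (2*β) * ‖g w‖^2 ≤ lam / (2*β) * (2 * β * r w) :=
    mul_le_mul_of_nonneg_left hgw (by positivity)
  have hsimp : lam / (2*β) * (2 * β * r w) = lam * r w := by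
    field_simp
  have hco : β / 2 * (1 + 1 / lam) = β/2 + β/(2*lam) := by
    field_simp
  rw [hco]
  rw [hsimp] at hmul
  nlinarith [hd, hCS, hAM, hmul]

end auxlemmas

/-- Pack a state-action pair into the ℓ² product space. -/
noncomputable def pairL2 {E F : Type*} [NormedAddCommGroup E] [NormedAddCommGroup F]
    (x : E) (u : F) : WithLp 2 (E × F) := (WithLp.equiv 2 (E × F)).symm (x, u)

lemma pairL2_norm_sub {E F : Type*} [NormedAddCommGroup E] [NormedAddCommGroup F]
    (x x' : E) (u : F) : ‖pairL2 x u - pairL2 x' u‖ = ‖x - x'‖ := by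
  have h : pairL2 x u - pairL2 x' u = (WithLp.equiv 2 (E × F)).symm (x - x', 0) := by
    rw [pairL2, pairL2, WithLp.equiv_symm_apply, ← WithLp.toLp_sub]
    congr 1
    simp [Prod.mk_sub_mk]
  rw [h]
  exact WithLp.norm_toLp_fst 2 E F (x - x')

/-- Proposition 4.2.
With the reservation coefficients `q h = C₁ (1 + 1/λ) (β/2) Σ_{i=0}^{H−h−1} (C₂ σₓ²)^i`,
if each previously chosen action satisfies its reservation-augmented safety constraint,
then the prior action `u† h` satisfies the round-`h` safety constraint; in particular
the round-`h` safe action set is nonempty. -/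
theorem stmt2 {E F : Type*}
    [NormedAddCommGroup E] [InnerProductSpace ℝ E] [CompleteSpace E]
    [NormedAddCommGroup F] [InnerProductSpace ℝ F] [CompleteSpace F]
    (H : ℕ) (hH : 1 ≤ H)
    (β lam σx C₁ C₂ : ℝ)
    (hβ : 0 < β) (hlam : 0 < lam) (hσx : 0 ≤ σx) (hC₁ : 1 ≤ C₁) (hC₂ : 1 ≤ C₂)
    (r : ℕ → WithLp 2 (E × F) → ℝ) (g : ℕ → WithLp 2 (E × F) → WithLp 2 (E × F))
    (f : ℕ → E → F → E)
    (hr0 : ∀ h < H, ∀ z, 0 ≤ r h z)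
    (hconv : ∀ h < H, ConvexOn ℝ Set.univ (r h))
    (hgrad : ∀ h < H, ∀ z, HasGradientAt (r h) (g h z) z)
    (hglip : ∀ h < H, ∀ z w, ‖g h z - g h w‖ ≤ β * ‖z - w‖)
    (hf : ∀ h < H, ∀ (a a' : E) (b : F), ‖f h a b - f h a' b‖ ≤ σx * ‖a - a'‖)
    (q : ℕ → ℝ)
    (hqdef : ∀ h,
      q h = C₁ * (1 + 1 / lam) * (β / 2) * ∑ i ∈ Finset.range (H - h), (C₂ * σx ^ 2) ^ i)
    (u udag : ℕ → F) (x xdag : ℕ → E)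
    (hx0 : x 0 = xdag 0)
    (hxrec : ∀ h, x (h + 1) = f h (x h) (u h))
    (hxdagrec : ∀ h, xdag (h + 1) = f h (xdag h) (udag h)) :
    ∀ h < H,
      (∀ i < h,
        (∑ j ∈ Finset.range i, r j (pairL2 (x j) (u j))) + r i (pairL2 (x i) (u i))
            + q i * ‖f i (x i) (u i) - f i (xdag i) (udag i)‖ ^ 2
          ≤ (1 + lam) * ∑ j ∈ Finset.range (i + 1), r j (pairL2 (xdag j) (udag j))) →
      (∑ j ∈ Finset.range h, r j (pairL2 (x j) (u j))) + r h (pairL2 (x h) (udag h))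
          + q h * ‖f h (x h) (udag h) - f h (xdag h) (udag h)‖ ^ 2
        ≤ (1 + lam) * ∑ j ∈ Finset.range (h + 1), r j (pairL2 (xdag j) (udag j)) := by
  have hq_nonneg : ∀ k, 0 ≤ q k := by
    intro k
    rw [hqdef k]
    have hS : (0:ℝ) ≤ ∑ i ∈ Finset.range (H - k), (C₂ * σx ^ 2) ^ i :=
      Finset.sum_nonneg fun i _ => pow_nonneg (by positivity) i
    have hC₁' : (0:ℝ) ≤ C₁ := le_trans zero_le_one hC₁
    have h1 : (0:ℝ) ≤ 1 + 1 / lam := by positivity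
    have h2 : (0:ℝ) ≤ β / 2 := by positivity
    exact mul_nonneg (mul_nonneg (mul_nonneg hC₁' h1) h2) hS
  intro h
  induction h with
  | zero =>
      intro hh _
      simp only [Finset.range_zero, Finset.sum_empty, Finset.sum_range_one, hx0,
        sub_self, norm_zero, zero_add]
      have hr := hr0 0 hh (pairL2 (xdag 0) (udag 0))
      nlinarith [hr, hq_nonneg 0, hlam]
  | succ k _ =>
      intro hh hprev
      have hkH : k < H := Nat.lt_of_succ_lt hh
      have hkc := hprev k (Nat.lt_succ_self k)
      have hfk : ‖f k (x k) (u k) - f k (xdag k) (udag k)‖ = ‖x (k+1) - xdag (k+1)‖ := by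
        rw [hxrec k, hxdagrec k]
      rw [hfk] at hkc
      have hsm := smooth_convex_bound hβ hlam (hr0 (k+1) hh) (hgrad (k+1) hh)
        (hglip (k+1) hh) (hconv (k+1) hh)
        (pairL2 (xdag (k+1)) (udag (k+1))) (pairL2 (x (k+1)) (udag (k+1)))
      rw [pairL2_norm_sub] at hsm
      have hfb : ‖f (k+1) (x (k+1)) (udag (k+1)) - f (k+1) (xdag (k+1)) (udag (k+1))‖
          ≤ σx * ‖x (k+1) - xdag (k+1)‖ := hf (k+1) hh _ _ _
      have hq1 : q (k+1) * ‖f (k+1) (x (k+1)) (udag (k+1))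
            - f (k+1) (xdag (k+1)) (udag (k+1))‖ ^ 2
          ≤ q (k+1) * (σx ^ 2 * ‖x (k+1) - xdag (k+1)‖ ^ 2) := by
        have := pow_le_pow_left₀ (norm_nonneg _) hfb 2
        rw [mul_pow] at this
        exact mul_le_mul_of_nonneg_left this (hq_nonneg (k+1))
      have hcoef : β / 2 * (1 + 1 / lam) + q (k+1) * σx ^ 2 ≤ q k := by
        rw [hqdef k, hqdef (k+1)]
        have hHk : H - k = (H - (k+1)) + 1 := by omega
        rw [hHk, Finset.sum_range_succ']
        have hpow : ∀ i, (C₂ * σx ^ 2) ^ (i + 1) = (C₂ * σx ^ 2) ^ i * (C₂ * σx ^ 2) := by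
          intro i; rw [pow_succ]
        simp only [hpow, pow_zero]
        rw [← Finset.sum_mul]
        set S := ∑ i ∈ Finset.range (H - (k+1)), (C₂ * σx ^ 2) ^ i with hSdef
        have hS0 : 0 ≤ S := Finset.sum_nonneg fun i _ => pow_nonneg (by positivity) i
        have hP : (0:ℝ) ≤ (1 + 1 / lam) * (β / 2) := by positivity
        nlinarith [mul_nonneg (sub_nonneg.mpr hC₁) hP,
          mul_nonneg (mul_nonneg (mul_nonneg (mul_nonneg
            (le_trans zero_le_one hC₁) hP) hS0) (sq_nonneg σx)) (sub_nonneg.mpr hC₂),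
          sq_nonneg σx, hS0, hP]
      have hcoefe := mul_le_mul_of_nonneg_right hcoef (sq_nonneg ‖x (k+1) - xdag (k+1)‖)
      rw [Finset.sum_range_succ (fun j => r j (pairL2 (x j) (u j))) k,
        Finset.sum_range_succ (fun j => r j (pairL2 (xdag j) (udag j))) (k+1)]
      nlinarith [hkc, hsm, hq1, hcoefe, sq_nonneg ‖x (k+1) - xdag (k+1)‖]
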